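/- Let d ≥ 1. If K is a closed subgroup of the symplectic group Sp_{2d}(ℤ₂) whose image under the reduction map Sp_{2d}(ℤ₂) → Sp_{2d}(ℤ/8ℤ) is all of Sp_{2d}(ℤ/8ℤ), then K = Sp_{2d}(ℤ₂). (Lemma 2.2.1(a) for p = 2, instantiated at G = Sp_{2d} over ℤ₂.) -/

import Mathlib

open Matrix

/-- The standard symplectic matrix `J = ((0, I), (−I, 0))`. -/
def Jmat (d : ℕ) (R : Type*) [CommRing R] :
    Matrix (Fin d ⊕ Fin d) (Fin d ⊕ Fin d) R :=
  Matrix.fromBlocks 0 1 (-1) 0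

/-- The symplectic group `Sp_{2d}(R) = {g ∈ GL_{2d}(R) : gᵀ J g = J}`, as a subgroup of
`GL_{2d}(R)`. -/
def SpSubgroup (d : ℕ) (R : Type*) [CommRing R] : Subgroup (GL (Fin d ⊕ Fin d) R) where
  carrier := {g | (g : Matrix (Fin d ⊕ Fin d) (Fin d ⊕ Fin d) R)ᵀ * Jmat d R * g = Jmat d R}
  one_mem' := by simp
  mul_mem' := by
    intro a b ha hb
    simp only [Set.mem_setOf_eq, Units.val_mul, Matrix.transpose_mul] at *
    have h : (b : Matrix (Fin d ⊕ Fin d) (Fin d ⊕ Fin d) R)ᵀ *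
        (a : Matrix (Fin d ⊕ Fin d) (Fin d ⊕ Fin d) R)ᵀ * Jmat d R *
        ((a : Matrix (Fin d ⊕ Fin d) (Fin d ⊕ Fin d) R) *
          (b : Matrix (Fin d ⊕ Fin d) (Fin d ⊕ Fin d) R)) =
        (b : Matrix (Fin d ⊕ Fin d) (Fin d ⊕ Fin d) R)ᵀ *
          ((a : Matrix (Fin d ⊕ Fin d) (Fin d ⊕ Fin d) R)ᵀ * Jmat d R *
            (a : Matrix (Fin d ⊕ Fin d) (Fin d ⊕ Fin d) R)) *
          (b : Matrix (Fin d ⊕ Fin d) (Fin d ⊕ Fin d) R) := by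
      noncomm_ring
    rw [h, ha, hb]
  inv_mem' := by
    intro a ha
    simp only [Set.mem_setOf_eq] at *
    have h2 : (a : Matrix (Fin d ⊕ Fin d) (Fin d ⊕ Fin d) R) *
        ((a⁻¹ : GL (Fin d ⊕ Fin d) R) : Matrix (Fin d ⊕ Fin d) (Fin d ⊕ Fin d) R) = 1 := by
      rw [← Units.val_mul, mul_inv_cancel, Units.val_one]
    have h1 : ((a⁻¹ : GL (Fin d ⊕ Fin d) R) : Matrix (Fin d ⊕ Fin d) (Fin d ⊕ Fin d) R)ᵀ *
        (a : Matrix (Fin d ⊕ Fin d) (Fin d ⊕ Fin d) R)ᵀ = 1 := by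
      rw [← Matrix.transpose_mul, h2, Matrix.transpose_one]
    calc ((a⁻¹ : GL (Fin d ⊕ Fin d) R) : Matrix (Fin d ⊕ Fin d) (Fin d ⊕ Fin d) R)ᵀ * Jmat d R *
          ((a⁻¹ : GL (Fin d ⊕ Fin d) R) : Matrix (Fin d ⊕ Fin d) (Fin d ⊕ Fin d) R)
        = ((a⁻¹ : GL (Fin d ⊕ Fin d) R) : Matrix (Fin d ⊕ Fin d) (Fin d ⊕ Fin d) R)ᵀ *
            ((a : Matrix (Fin d ⊕ Fin d) (Fin d ⊕ Fin d) R)ᵀ * Jmat d R *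
              (a : Matrix (Fin d ⊕ Fin d) (Fin d ⊕ Fin d) R)) *
            ((a⁻¹ : GL (Fin d ⊕ Fin d) R) : Matrix (Fin d ⊕ Fin d) (Fin d ⊕ Fin d) R) := by
          rw [ha]
      _ = (((a⁻¹ : GL (Fin d ⊕ Fin d) R) : Matrix (Fin d ⊕ Fin d) (Fin d ⊕ Fin d) R)ᵀ *
            (a : Matrix (Fin d ⊕ Fin d) (Fin d ⊕ Fin d) R)ᵀ) * Jmat d R *
            ((a : Matrix (Fin d ⊕ Fin d) (Fin d ⊕ Fin d) R) *
              ((a⁻¹ : GL (Fin d ⊕ Fin d) R) : Matrix (Fin d ⊕ Fin d) (Fin d ⊕ Fin d) R)) := by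
          noncomm_ring
      _ = Jmat d R := by rw [h1, h2, one_mul, mul_one]

/-- The reduction-mod-8 ring homomorphism `ℤ₂ →+* ℤ/8ℤ`. -/
noncomputable def toZMod8 : ℤ_[2] →+* ZMod 8 :=
  (ZMod.castHom (show (8 : ℕ) ∣ 2 ^ 3 by norm_num) (ZMod 8)).comp (PadicInt.toZModPow 3)


namespace Stmt5Aux

set_option maxHeartbeats 1000000

variable {d : ℕ}

local notation "Mx" => Matrix (Fin d ⊕ Fin d) (Fin d ⊕ Fin d) ℤ_[2]
local notation "Jm" => Jmat d ℤ_[2]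

/-- `B ≡ A mod 2^n` entrywise. -/
def Cong (n : ℕ) (A B : Matrix (Fin d ⊕ Fin d) (Fin d ⊕ Fin d) ℤ_[2]) : Prop :=
  ∃ E, B = A + (2 : ℤ_[2]) ^ n • E

lemma Cong.symm {n : ℕ} {A B : Mx} (h : Cong n A B) : Cong n B A := by
  obtain ⟨E, rfl⟩ := h
  exact ⟨-E, by simp⟩

lemma Cong.trans {n : ℕ} {A B C : Mx} (h : Cong n A B) (h' : Cong n B C) : Cong n A C := by
  obtain ⟨E, rfl⟩ := h
  obtain ⟨E', rfl⟩ := h'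
  exact ⟨E + E', by rw [smul_add, add_assoc]⟩

lemma Cong.mul_left {n : ℕ} (C : Mx) {A B : Mx} (h : Cong n A B) :
    Cong n (C * A) (C * B) := by
  obtain ⟨E, rfl⟩ := h
  exact ⟨C * E, by rw [mul_add, mul_smul_comm]⟩

lemma J_transpose : (Jm)ᵀ = -(Jm) := by
  simp [Jmat, Matrix.fromBlocks_transpose, Matrix.fromBlocks_neg]

lemma J_mul_J : (Jm) * (Jm) = -1 := by
  simp [Jmat, Matrix.fromBlocks_multiply, ← Matrix.fromBlocks_one, Matrix.fromBlocks_neg]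

lemma toZModPow_two_eq_zero : (PadicInt.toZModPow (p := 2) 1) (2:ℤ_[2]) = 0 := by
  have h : ((2:ℤ_[2])) = ((2:ℕ):ℤ_[2]) := by norm_num
  rw [h, map_natCast]; decide

lemma isUnit_of_cong_one {M : Mx} (E : Mx) (hM : M = 1 + (2:ℤ_[2]) • E) :
    IsUnit M := by
  rw [Matrix.isUnit_iff_isUnit_det]
  have hmap : M.map (PadicInt.toZModPow (p := 2) 1) = 1 := by
    subst hM
    ext i j
    simp only [Matrix.map_apply, Matrix.add_apply, Matrix.smul_apply, map_add, smul_eq_mul,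
      _root_.map_mul, toZModPow_two_eq_zero, zero_mul, add_zero]
    by_cases h : i = j <;> simp [h, Matrix.one_apply]
  have hdet : (PadicInt.toZModPow (p := 2) 1) M.det = 1 := by
    rw [RingHom.map_det, RingHom.mapMatrix_apply, hmap, Matrix.det_one]
  rw [PadicInt.isUnit_iff]
  refine le_antisymm (PadicInt.norm_le_one _) ?_
  by_contra hlt
  push_neg at hlt
  obtain ⟨z, hz⟩ : (2:ℤ_[2]) ∣ M.det := by
    have := (PadicInt.norm_lt_one_iff_dvd M.det).mp hlt
    simpa using this
  rw [hz, _root_.map_mul, toZModPow_two_eq_zero, zero_mul] at hdet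
  exact absurd hdet (by decide)

lemma cayley_step (m : ℕ) (A : Mx)
    (hu : (1 + (2:ℤ_[2])^(m+3) • A)ᵀ * Jm * (1 + (2:ℤ_[2])^(m+3) • A) = Jm) :
    ∃ y Y₀ : Mx, IsUnit y ∧ yᵀ * Jm * y = Jm ∧ y = 1 + (2:ℤ_[2])^(m+2) • Y₀ ∧
      Cong (m+4) (1 + (2:ℤ_[2])^(m+3) • A) (y*y) := by
  obtain ⟨s, hs⟩ : ∃ s : ℤ_[2], s = 2^m := ⟨_, rfl⟩
  have hsne : s ≠ 0 := by rw [hs]; exact pow_ne_zero _ two_ne_zero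
  have hpow : ∀ k : ℕ, (2:ℤ_[2])^(m+k) = 2^k * s := fun k => by
    rw [hs, ← pow_add, Nat.add_comm m k]
  have h2 : (2:ℤ_[2])^(m+2) = 2^2*s := hpow 2
  have h3 : (2:ℤ_[2])^(m+3) = 2^3*s := hpow 3
  have h4 : (2:ℤ_[2])^(m+4) = 2^4*s := hpow 4
  rw [h3] at hu
  obtain ⟨S, hS⟩ : ∃ S : Mx, S = Aᵀ * Jm * A := ⟨_, rfl⟩
  have hA : Aᵀ*Jm + Jm*A + ((2:ℤ_[2])^3*s) • S = 0 := by
    have expand : (1 + ((2:ℤ_[2])^3*s) • A)ᵀ * Jm * (1 + ((2:ℤ_[2])^3*s) • A)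
        = Jm + ((2:ℤ_[2])^3*s) • (Aᵀ*Jm + Jm*A + ((2:ℤ_[2])^3*s) • (Aᵀ*(Jm*A))) := by
      simp only [transpose_add, transpose_one, transpose_smul, mul_add, add_mul,
        smul_mul_assoc, mul_smul_comm, smul_add, smul_smul, one_mul, mul_one, mul_assoc]
      match_scalars <;> ring
    rw [expand] at hu
    have h0 : ((2:ℤ_[2])^3*s) • (Aᵀ*Jm + Jm*A + ((2:ℤ_[2])^3*s) • (Aᵀ*(Jm*A))) = 0 := by
      rwa [add_eq_left] at hu
    have hSS : S = Aᵀ*(Jm*A) := by rw [hS, mul_assoc]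
    rw [← hSS] at h0
    rcases smul_eq_zero.mp h0 with h | h
    · exact absurd h (mul_ne_zero (pow_ne_zero _ two_ne_zero) hsne)
    · exact h
  have hSt : Sᵀ = -S := by
    rw [hS]
    simp only [transpose_mul, transpose_transpose, J_transpose, mul_neg, neg_mul, mul_assoc]
  obtain ⟨B, hB⟩ : ∃ B : Mx, B = A - ((2:ℤ_[2])^2*s) • (Jm*S) := ⟨_, rfl⟩
  have hJtJ : (Jm)ᵀ * Jm = 1 := by rw [J_transpose, neg_mul, J_mul_J, neg_neg]
  have hBrel : Jm*B + Bᵀ*Jm = 0 := by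
    have e1 : Jm*B + Bᵀ*Jm
        = (Aᵀ*Jm + Jm*A + ((2:ℤ_[2])^3*s) • S)
          - ((2:ℤ_[2])^2*s) • (Jm*(Jm*S)) - ((2:ℤ_[2])^2*s) • (Sᵀ*((Jm)ᵀ*Jm))
          - ((2:ℤ_[2])^3*s) • S := by
      simp only [hB, transpose_sub, transpose_smul, transpose_mul, mul_sub, sub_mul,
        smul_mul_assoc, mul_smul_comm, smul_smul, mul_assoc]
      match_scalars <;> ring
    have hJJS : Jm*(Jm*S) = -S := by rw [← mul_assoc, J_mul_J, neg_one_mul]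
    have hJJ' : Sᵀ*((Jm)ᵀ*Jm) = -S := by rw [hJtJ, mul_one, hSt]
    rw [e1, hA, hJJS, hJJ']
    match_scalars <;> ring
  obtain ⟨X, hX⟩ : ∃ X : Mx, X = ((2:ℤ_[2])*s) • B := ⟨_, rfl⟩
  obtain ⟨v, hv⟩ : ∃ v : Mx, v = 1 + X := ⟨_, rfl⟩
  obtain ⟨w, hw⟩ : ∃ w : Mx, w = 1 - X := ⟨_, rfl⟩
  have hXrel : Xᵀ*Jm + Jm*X = 0 := by
    rw [hX, transpose_smul, smul_mul_assoc, mul_smul_comm, ← smul_add, add_comm (Bᵀ*Jm),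
      hBrel, smul_zero]
  have hv1 : v = 1 + (2:ℤ_[2]) • (s • B) := by
    rw [hv, hX, smul_smul]
  have hw1 : w = 1 + (2:ℤ_[2]) • (-(s • B)) := by
    rw [hw, hX, smul_neg, smul_smul, sub_eq_add_neg]
  have hvu : IsUnit v := isUnit_of_cong_one _ hv1
  have hwu : IsUnit w := isUnit_of_cong_one _ hw1
  have hwdet : IsUnit w.det := (Matrix.isUnit_iff_isUnit_det w).mp hwu
  have hwtdet : IsUnit (wᵀ).det := by rwa [Matrix.det_transpose]
  have hcomm : w⁻¹ * v = v * w⁻¹ := by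
    have hvw : v * w = w * v := by rw [hv, hw]; noncomm_ring
    calc w⁻¹ * v = w⁻¹ * (v * (w * w⁻¹)) := by rw [Matrix.mul_nonsing_inv _ hwdet, mul_one]
      _ = w⁻¹ * (w * (v * w⁻¹)) := by
          rw [show v * (w * w⁻¹) = (v * w) * w⁻¹ by simp only [mul_assoc], hvw]
          simp only [mul_assoc]
      _ = (w⁻¹ * w) * (v * w⁻¹) := by simp only [mul_assoc]
      _ = v * w⁻¹ := by rw [Matrix.nonsing_inv_mul _ hwdet, one_mul]
  have hwiu : IsUnit (w⁻¹) := by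
    refine ⟨hwu.unit⁻¹, ?_⟩
    rw [Matrix.coe_units_inv, hwu.unit_spec]
  have hyu : IsUnit (v * w⁻¹) := hvu.mul hwiu
  have hvJv : vᵀ*Jm*v = wᵀ*Jm*w := by
    have e2 : vᵀ*Jm*v = wᵀ*Jm*w + ((Xᵀ*Jm + Jm*X) + (Xᵀ*Jm + Jm*X)) := by
      simp only [hv, hw, transpose_add, transpose_sub, transpose_one, mul_add, add_mul,
        mul_sub, sub_mul, one_mul, mul_one, mul_assoc]
      abel
    rw [e2, hXrel]; simp
  have hsymp : (v * w⁻¹)ᵀ * Jm * (v * w⁻¹) = Jm := by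
    have e3 : (v * w⁻¹)ᵀ * Jm * (v * w⁻¹) = (wᵀ)⁻¹ * (vᵀ*Jm*v) * w⁻¹ := by
      rw [transpose_mul, Matrix.transpose_nonsing_inv]
      simp only [mul_assoc]
    rw [e3, hvJv,
      show (wᵀ)⁻¹ * (wᵀ*Jm*w) * w⁻¹ = ((wᵀ)⁻¹*wᵀ)*(Jm*(w*w⁻¹)) by simp only [mul_assoc],
      Matrix.nonsing_inv_mul _ hwtdet, Matrix.mul_nonsing_inv _ hwdet, one_mul, mul_one]
  have hvsplit : v = w + ((2:ℤ_[2])^2*s) • B := by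
    rw [hv, hw, hX]
    match_scalars <;> ring
  have hy1 : v * w⁻¹ = 1 + ((2:ℤ_[2])^2*s) • (B * w⁻¹) := by
    rw [hvsplit, add_mul, smul_mul_assoc, Matrix.mul_nonsing_inv _ hwdet]
  have hww : (w*w)*(w⁻¹*w⁻¹) = 1 := by
    calc (w*w)*(w⁻¹*w⁻¹) = w*((w*w⁻¹)*w⁻¹) := by simp only [mul_assoc]
      _ = 1 := by rw [Matrix.mul_nonsing_inv _ hwdet, one_mul, Matrix.mul_nonsing_inv _ hwdet]
  have hsq : (v*w⁻¹)*(v*w⁻¹) = v*v*(w⁻¹*w⁻¹) := by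
    calc (v*w⁻¹)*(v*w⁻¹) = v*((w⁻¹*v)*w⁻¹) := by simp only [mul_assoc]
      _ = v*((v*w⁻¹)*w⁻¹) := by rw [hcomm]
      _ = v*v*(w⁻¹*w⁻¹) := by simp only [mul_assoc]
  obtain ⟨E₀, hE₀⟩ : ∃ E₀ : Mx,
      E₀ = ((2:ℤ_[2])*s)•(A*B - Jm*S) - ((2:ℤ_[2])*(s*s))•(A*(B*B)) := ⟨_, rfl⟩
  have hvv : v*v = (1 + ((2:ℤ_[2])^3*s)•A) * (w*w) + ((2:ℤ_[2])^4*s) • E₀ := by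
    rw [hv, hw, hX, hE₀, hB]
    simp only [mul_add, add_mul, mul_sub, sub_mul, smul_mul_assoc, mul_smul_comm,
      smul_add, smul_sub, smul_smul, one_mul, mul_one, mul_assoc]
    match_scalars <;> ring
  have hfin : (v*w⁻¹)*(v*w⁻¹)
      = (1 + ((2:ℤ_[2])^3*s)•A) + ((2:ℤ_[2])^4*s) • (E₀*(w⁻¹*w⁻¹)) := by
    rw [hsq, hvv, add_mul, smul_mul_assoc, mul_assoc, hww, mul_one]
  refine ⟨v * w⁻¹, B * w⁻¹, hyu, hsymp, by rw [h2]; exact hy1, ⟨E₀*(w⁻¹*w⁻¹), ?_⟩⟩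
  rw [h3, h4]
  exact hfin

lemma cong_sq (m : ℕ) {y Y₀ h : Mx} (hy : y = 1 + (2:ℤ_[2])^(m+2) • Y₀)
    (hch : Cong (m+3) y h) : Cong (m+4) (y*y) (h*h) := by
  obtain ⟨s, hs⟩ : ∃ s : ℤ_[2], s = 2^m := ⟨_, rfl⟩
  have hpow : ∀ k : ℕ, (2:ℤ_[2])^(m+k) = 2^k * s := fun k => by
    rw [hs, ← pow_add, Nat.add_comm m k]
  obtain ⟨F, hF⟩ := hch
  refine ⟨F + ((2:ℤ_[2])*s)•(F*Y₀ + Y₀*F) + ((2:ℤ_[2])^2*s)•(F*F), ?_⟩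
  rw [hF, hy, hpow 2, hpow 3, hpow 4]
  simp only [mul_add, add_mul, smul_add, smul_mul_assoc, mul_smul_comm, smul_smul,
    one_mul, mul_one, mul_assoc]
  match_scalars <;> ring

lemma cong_inv_mat {n : ℕ} {P Q Pi Qi : Mx} (hPi : Pi * P = 1) (hQi : Q * Qi = 1)
    (h : Cong n P Q) : Cong n Pi Qi := by
  obtain ⟨E, hE⟩ := h
  refine ⟨-(Pi * E * Qi), ?_⟩
  have hP : P = Q - (2:ℤ_[2])^n • E := by rw [hE]; abel
  calc Qi = (Pi * P) * Qi := by rw [hPi, one_mul]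
    _ = Pi * ((Q - (2:ℤ_[2])^n • E) * Qi) := by rw [hP, mul_assoc]
    _ = Pi * (Q * Qi) - (2:ℤ_[2])^n • (Pi * E * Qi) := by
        rw [sub_mul, mul_sub, smul_mul_assoc, mul_smul_comm, mul_assoc]
    _ = Pi + (2:ℤ_[2])^n • -(Pi * E * Qi) := by rw [hQi, mul_one, smul_neg, sub_eq_add_neg]

lemma cong3_of_map_eq {P Q : Mx} (h : ∀ i j, toZMod8 (P i j) = toZMod8 (Q i j)) :
    Cong 3 P Q := by
  have hinj : Function.Injective (ZMod.castHom (show (8:ℕ) ∣ 2^3 by norm_num) (ZMod 8)) := by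
    decide
  have hdvd : ∀ i j, ∃ e, Q i j = P i j + (2:ℤ_[2])^3 * e := by
    intro i j
    have h1 : PadicInt.toZModPow (p := 2) 3 (P i j) = PadicInt.toZModPow (p := 2) 3 (Q i j) :=
      hinj (h i j)
    have h0 : Q i j - P i j ∈ RingHom.ker (PadicInt.toZModPow (p := 2) 3) := by
      rw [RingHom.mem_ker, map_sub, ← h1, sub_self]
    rw [PadicInt.ker_toZModPow, Ideal.mem_span_singleton] at h0
    obtain ⟨e, he⟩ := h0
    refine ⟨e, ?_⟩
    have h2 : ((2:ℕ):ℤ_[2]) = (2:ℤ_[2]) := by norm_num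
    rw [h2] at he
    rw [← he]
    abel
  choose E hE using hdvd
  refine ⟨Matrix.of E, ?_⟩
  ext i j
  simp only [Matrix.add_apply, Matrix.smul_apply, Matrix.of_apply, smul_eq_mul]
  exact hE i j

lemma mapJ : (toZMod8).mapMatrix (Jmat d ℤ_[2]) = Jmat d (ZMod 8) := by
  have h0 : (0 : Matrix (Fin d) (Fin d) ℤ_[2]).map toZMod8 = 0 :=
    Matrix.map_zero _ (map_zero toZMod8)
  have h1 : (1 : Matrix (Fin d) (Fin d) ℤ_[2]).map toZMod8 = 1 :=
    Matrix.map_one _ (map_zero toZMod8) (map_one toZMod8)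
  have hn : (-1 : Matrix (Fin d) (Fin d) ℤ_[2]).map toZMod8 = -1 := by
    ext i j
    by_cases hij : i = j <;>
      simp [Matrix.map_apply, Matrix.neg_apply, Matrix.one_apply, hij]
  simp only [RingHom.mapMatrix_apply, Jmat, Matrix.fromBlocks_map, h0, h1, hn]

lemma map_mem_sp (g : GL (Fin d ⊕ Fin d) ℤ_[2]) (hg : g ∈ SpSubgroup d ℤ_[2]) :
    Matrix.GeneralLinearGroup.map toZMod8 g ∈ SpSubgroup d (ZMod 8) := by
  have hg' : ((g : GL (Fin d ⊕ Fin d) ℤ_[2]) : Mx)ᵀ * Jm *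
      ((g : GL (Fin d ⊕ Fin d) ℤ_[2]) : Mx) = Jm := hg
  show ((Matrix.GeneralLinearGroup.map toZMod8 g : GL _ (ZMod 8)) :
      Matrix (Fin d ⊕ Fin d) (Fin d ⊕ Fin d) (ZMod 8))ᵀ * Jmat d (ZMod 8) *
      ((Matrix.GeneralLinearGroup.map toZMod8 g : GL _ (ZMod 8)) :
      Matrix (Fin d ⊕ Fin d) (Fin d ⊕ Fin d) (ZMod 8)) = Jmat d (ZMod 8)
  have hcoe : ((Matrix.GeneralLinearGroup.map toZMod8 g : GL _ (ZMod 8)) :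
      Matrix (Fin d ⊕ Fin d) (Fin d ⊕ Fin d) (ZMod 8)) = toZMod8.mapMatrix (↑g : Mx) := rfl
  have hm := congrArg (toZMod8.mapMatrix) hg'
  rw [_root_.map_mul, _root_.map_mul] at hm
  rw [hcoe, ← mapJ]
  rw [show toZMod8.mapMatrix ((↑g : Mx)ᵀ) = (toZMod8.mapMatrix (↑g : Mx))ᵀ by
    simp only [RingHom.mapMatrix_apply, Matrix.transpose_map]] at hm
  exact hm

lemma tendsto_of_cong (P : ℕ → Mx) (Q : Mx) (h : ∀ m, Cong (m+3) (P m) Q) :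
    Filter.Tendsto P Filter.atTop (nhds Q) := by
  have h2norm : ‖(2:ℤ_[2])‖ = (1/2 : ℝ) := by
    have h2 : ((2:ℕ):ℤ_[2]) = (2:ℤ_[2]) := by norm_num
    rw [← h2, PadicInt.norm_p]
    norm_num
  have hb : ∀ m i j, ‖P m i j - Q i j‖ ≤ (1/2:ℝ)^m := by
    intro m i j
    obtain ⟨E, hE⟩ := h m
    have he : P m i j - Q i j = -((2:ℤ_[2])^(m+3) * E i j) := by
      rw [hE]
      simp only [Matrix.add_apply, Matrix.smul_apply, smul_eq_mul]
      ring
    rw [he, norm_neg, norm_mul, norm_pow, h2norm]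
    calc ((1/2:ℝ))^(m+3) * ‖E i j‖ ≤ (1/2)^(m+3) * 1 := by
          refine mul_le_mul_of_nonneg_left (PadicInt.norm_le_one _) (by positivity)
      _ = (1/2)^(m+3) := mul_one _
      _ ≤ (1/2)^m := pow_le_pow_of_le_one (by norm_num) (by norm_num) (by omega)
  refine tendsto_pi_nhds.mpr ?_
  intro i
  rw [tendsto_pi_nhds]
  intro j
  rw [tendsto_iff_norm_sub_tendsto_zero]
  refine squeeze_zero (fun m => norm_nonneg _) (fun m => hb m i j) ?_
  exact tendsto_pow_atTop_nhds_zero_of_lt_one (by norm_num) (by norm_num)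

end Stmt5Aux

/-- Let `d ≥ 1`. If `K` is a closed subgroup of `Sp_{2d}(ℤ₂)` whose image
under the reduction map `Sp_{2d}(ℤ₂) → Sp_{2d}(ℤ/8ℤ)` is all of `Sp_{2d}(ℤ/8ℤ)`, then
`K = Sp_{2d}(ℤ₂)`. -/
theorem stmt5 (d : ℕ) (hd : 1 ≤ d)
    (K : Subgroup (GL (Fin d ⊕ Fin d) ℤ_[2]))
    (hsub : K ≤ SpSubgroup d ℤ_[2])
    (hclosed : IsClosed (K : Set (GL (Fin d ⊕ Fin d) ℤ_[2])))
    (hsurj : ∀ g : GL (Fin d ⊕ Fin d) (ZMod 8), g ∈ SpSubgroup d (ZMod 8) →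
      ∃ k ∈ K, Matrix.GeneralLinearGroup.map toZMod8 k = g) :
    K = SpSubgroup d ℤ_[2] := by
  apply le_antisymm hsub
  intro g hg
  have key : ∀ m : ℕ, ∀ g' : GL (Fin d ⊕ Fin d) ℤ_[2], g' ∈ SpSubgroup d ℤ_[2] →
      ∃ k ∈ K, Stmt5Aux.Cong (m+3)
        ((k : GL (Fin d ⊕ Fin d) ℤ_[2]) : Matrix (Fin d ⊕ Fin d) (Fin d ⊕ Fin d) ℤ_[2])
        ((g' : GL (Fin d ⊕ Fin d) ℤ_[2]) : Matrix (Fin d ⊕ Fin d) (Fin d ⊕ Fin d) ℤ_[2]) := by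
    intro m
    induction m with
    | zero =>
      intro g' hg'
      obtain ⟨k, hk, hmap⟩ := hsurj (Matrix.GeneralLinearGroup.map toZMod8 g')
        (Stmt5Aux.map_mem_sp g' hg')
      refine ⟨k, hk, Stmt5Aux.cong3_of_map_eq ?_⟩
      intro i j
      have hval := congrArg (fun u : GL (Fin d ⊕ Fin d) (ZMod 8) =>
        (↑u : Matrix (Fin d ⊕ Fin d) (Fin d ⊕ Fin d) (ZMod 8)) i j) hmap
      simp only [Matrix.GeneralLinearGroup.map, Units.coe_map, MonoidHom.coe_coe,
        RingHom.mapMatrix_apply, Matrix.map_apply] at hval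
      exact hval
    | succ m IH =>
      intro g' hg'
      obtain ⟨k, hk, E, hE⟩ := IH g' hg'
      have hkg : (k⁻¹ * g') ∈ SpSubgroup d ℤ_[2] := mul_mem (inv_mem (hsub hk)) hg'
      have hu : (↑(k⁻¹ * g') : Matrix (Fin d ⊕ Fin d) (Fin d ⊕ Fin d) ℤ_[2])
          = 1 + (2:ℤ_[2])^(m+3) • ((↑(k⁻¹) : Matrix (Fin d ⊕ Fin d) (Fin d ⊕ Fin d) ℤ_[2]) * E) := by
        rw [Units.val_mul, hE, mul_add, mul_smul_comm, k.inv_mul]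
      have husymp : (1 + (2:ℤ_[2])^(m+3) • ((↑(k⁻¹) : Matrix (Fin d ⊕ Fin d) (Fin d ⊕ Fin d) ℤ_[2]) * E))ᵀ
          * Jmat d ℤ_[2] *
          (1 + (2:ℤ_[2])^(m+3) • ((↑(k⁻¹) : Matrix (Fin d ⊕ Fin d) (Fin d ⊕ Fin d) ℤ_[2]) * E))
          = Jmat d ℤ_[2] := by
        rw [← hu]; exact hkg
      obtain ⟨y, Y₀, hyu, hysymp, hyform, hycong⟩ := Stmt5Aux.cayley_step m _ husymp
      have hymem : hyu.unit ∈ SpSubgroup d ℤ_[2] := by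
        show ((hyu.unit : GL (Fin d ⊕ Fin d) ℤ_[2]) :
            Matrix (Fin d ⊕ Fin d) (Fin d ⊕ Fin d) ℤ_[2])ᵀ * Jmat d ℤ_[2] * _ = Jmat d ℤ_[2]
        rw [hyu.unit_spec]
        exact hysymp
      obtain ⟨h, hh, hch⟩ := IH hyu.unit hymem
      rw [hyu.unit_spec] at hch
      have hsqc := Stmt5Aux.cong_sq m hyform hch.symm
      refine ⟨k * (h * h), mul_mem hk (mul_mem hh hh), ?_⟩
      have h1 := hycong.trans hsqc
      have h2 := h1.mul_left (↑k : Matrix (Fin d ⊕ Fin d) (Fin d ⊕ Fin d) ℤ_[2])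
      have hgu : ((g' : GL (Fin d ⊕ Fin d) ℤ_[2]) : Matrix (Fin d ⊕ Fin d) (Fin d ⊕ Fin d) ℤ_[2])
          = ((k : GL (Fin d ⊕ Fin d) ℤ_[2]) : Matrix (Fin d ⊕ Fin d) (Fin d ⊕ Fin d) ℤ_[2]) *
            (1 + (2:ℤ_[2])^(m+3) • ((↑(k⁻¹) : Matrix (Fin d ⊕ Fin d) (Fin d ⊕ Fin d) ℤ_[2]) * E)) := by
        rw [← hu, ← Units.val_mul, mul_inv_cancel_left]
      have hk2 : ((k * (h * h) : GL (Fin d ⊕ Fin d) ℤ_[2]) :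
            Matrix (Fin d ⊕ Fin d) (Fin d ⊕ Fin d) ℤ_[2])
          = ((k : GL (Fin d ⊕ Fin d) ℤ_[2]) : Matrix (Fin d ⊕ Fin d) (Fin d ⊕ Fin d) ℤ_[2]) *
            ((↑h : Matrix (Fin d ⊕ Fin d) (Fin d ⊕ Fin d) ℤ_[2]) *
              (↑h : Matrix (Fin d ⊕ Fin d) (Fin d ⊕ Fin d) ℤ_[2])) := by
        rw [Units.val_mul, Units.val_mul]
      show Stmt5Aux.Cong (m+4) ((k * (h * h) : GL (Fin d ⊕ Fin d) ℤ_[2]) :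
        Matrix (Fin d ⊕ Fin d) (Fin d ⊕ Fin d) ℤ_[2])
        ((g' : GL (Fin d ⊕ Fin d) ℤ_[2]) : Matrix (Fin d ⊕ Fin d) (Fin d ⊕ Fin d) ℤ_[2])
      rw [hk2, hgu]
      exact h2.symm
  have key2 : ∀ m : ℕ, ∃ k, k ∈ K ∧ Stmt5Aux.Cong (m+3)
      ((k : GL (Fin d ⊕ Fin d) ℤ_[2]) : Matrix (Fin d ⊕ Fin d) (Fin d ⊕ Fin d) ℤ_[2])
      ((g : GL (Fin d ⊕ Fin d) ℤ_[2]) : Matrix (Fin d ⊕ Fin d) (Fin d ⊕ Fin d) ℤ_[2]) ∧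
      Stmt5Aux.Cong (m+3)
      ((k⁻¹ : GL (Fin d ⊕ Fin d) ℤ_[2]) : Matrix (Fin d ⊕ Fin d) (Fin d ⊕ Fin d) ℤ_[2])
      ((g⁻¹ : GL (Fin d ⊕ Fin d) ℤ_[2]) : Matrix (Fin d ⊕ Fin d) (Fin d ⊕ Fin d) ℤ_[2]) := by
    intro m
    obtain ⟨k, hk, hc⟩ := key m g hg
    exact ⟨k, hk, hc, Stmt5Aux.cong_inv_mat k.inv_mul g.mul_inv hc⟩
  choose k hkK hkc hkc' using key2
  have ht1 : Filter.Tendsto (fun m => (↑(k m) : Matrix (Fin d ⊕ Fin d) (Fin d ⊕ Fin d) ℤ_[2]))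
      Filter.atTop (nhds ↑g) := Stmt5Aux.tendsto_of_cong _ _ hkc
  have ht2 : Filter.Tendsto (fun m => (↑((k m)⁻¹) : Matrix (Fin d ⊕ Fin d) (Fin d ⊕ Fin d) ℤ_[2]))
      Filter.atTop (nhds ↑(g⁻¹)) := Stmt5Aux.tendsto_of_cong _ _ hkc'
  have htend : Filter.Tendsto k Filter.atTop (nhds g) := by
    rw [(Units.isEmbedding_embedProduct
      (M := Matrix (Fin d ⊕ Fin d) (Fin d ⊕ Fin d) ℤ_[2])).tendsto_nhds_iff]
    have hco : (Units.embedProduct (Matrix (Fin d ⊕ Fin d) (Fin d ⊕ Fin d) ℤ_[2])) ∘ k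
        = fun m => ((↑(k m) : Matrix (Fin d ⊕ Fin d) (Fin d ⊕ Fin d) ℤ_[2]),
            MulOpposite.op (↑((k m)⁻¹) : Matrix (Fin d ⊕ Fin d) (Fin d ⊕ Fin d) ℤ_[2])) := by
      funext m
      rw [Function.comp_apply, Units.embedProduct_apply]
    rw [hco, Units.embedProduct_apply]
    exact ht1.prodMk_nhds ((MulOpposite.continuous_op.tendsto _).comp ht2)
  exact hclosed.mem_of_tendsto htend (Filter.Eventually.of_forall hkK)
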